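/- Let p be a prime and q = p^m a prime power. Suppose n = s + b₁ + … + b_k, where k ≥ 0, either s = 0 or s = p^t for some t ≥ 0, the natural numbers b₁, …, b_k are pairwise coprime and each greater than 1, and for each i, rᵢ is a prime dividing q^{bᵢ} − 1 that does not divide q^j − 1 for any 1 ≤ j < bᵢ. Set t = 0 in case s = 0. Then SL_n(F_q) contains no element of order p^{t+1}·r₁·…·r_k. -/

import Mathlib

open Polynomial UniqueFactorizationMonoid Finset

private lemma sum_le_prod_of_two_le {ι : Type*} [DecidableEq ι] (S : Finset ι) (f : ι → ℕ)
    (h : ∀ i ∈ S, 2 ≤ f i) : ∑ i ∈ S, f i ≤ ∏ i ∈ S, f i := by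
  induction S using Finset.induction with
  | empty => simp
  | @insert a S ha ih =>
    rw [Finset.sum_insert ha, Finset.prod_insert ha]
    have h2 : 2 ≤ f a := h a (Finset.mem_insert_self a S)
    have hP : 1 ≤ ∏ i ∈ S, f i :=
      Finset.one_le_prod' fun i hi => le_trans one_le_two (h i (Finset.mem_insert_of_mem hi))
    have hsum := ih fun i hi => h i (Finset.mem_insert_of_mem hi)
    rcases S.eq_empty_or_nonempty with rfl | ⟨i0, hi0⟩
    · simp
    · have hP2 : 2 ≤ ∏ i ∈ S, f i :=
        le_trans (h i0 (Finset.mem_insert_of_mem hi0))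
          (Finset.single_le_prod' (fun i hi => le_trans one_le_two (h i (Finset.mem_insert_of_mem hi))) hi0)
      calc f a + ∑ i ∈ S, f i ≤ f a + ∏ i ∈ S, f i := Nat.add_le_add_left hsum _
        _ ≤ f a * ∏ i ∈ S, f i := Nat.add_le_mul h2 hP2

private lemma prod_dvd_of_pairwise_coprime {ι : Type*} [DecidableEq ι] (S : Finset ι) (f : ι → ℕ)
    (hcop : ∀ i j, i ≠ j → Nat.Coprime (f i) (f j)) (d : ℕ) (h : ∀ i ∈ S, f i ∣ d) :
    ∏ i ∈ S, f i ∣ d := by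
  induction S using Finset.induction with
  | empty => simpa using one_dvd d
  | @insert a S ha ih =>
    rw [Finset.prod_insert ha]
    refine Nat.Coprime.mul_dvd_of_dvd_of_dvd ?_ (h a (Finset.mem_insert_self a S))
      (ih fun i hi => h i (Finset.mem_insert_of_mem hi))
    exact Nat.Coprime.prod_right fun i hi => hcop a i (fun e => ha (e ▸ hi))

private lemma order_dvd_aux (q rr bi d : ℕ) (hq : 2 ≤ q) (hr : rr.Prime)
    (hbi : 0 < bi)
    (h1 : rr ∣ q ^ bi - 1) (h2 : ∀ j, 1 ≤ j → j < bi → ¬ rr ∣ q ^ j - 1)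
    (hd : rr ∣ q ^ d - 1) : bi ∣ d := by
  haveI : NeZero rr := ⟨hr.ne_zero⟩
  have key : ∀ e : ℕ, rr ∣ q ^ e - 1 ↔ (q : ZMod rr) ^ e = 1 := by
    intro e
    rw [← ZMod.natCast_eq_zero_iff, Nat.cast_sub (Nat.one_le_pow e q (by omega)),
      Nat.cast_pow, Nat.cast_one, sub_eq_zero]
  set x : ZMod rr := (q : ZMod rr) with hx
  have hxb : x ^ bi = 1 := (key bi).1 h1
  have hxd : x ^ d = 1 := (key d).1 hd
  have hfin : orderOf x ∣ bi := orderOf_dvd_of_pow_eq_one hxb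
  have hpos : 0 < orderOf x := by
    have : IsOfFinOrder x := isOfFinOrder_iff_pow_eq_one.2 ⟨bi, hbi, hxb⟩
    exact this.orderOf_pos
  have hnlt : ¬ orderOf x < bi := fun hlt =>
    h2 _ hpos hlt ((key _).2 (pow_orderOf_eq_one x))
  have heq : orderOf x = bi := le_antisymm (Nat.le_of_dvd hbi hfin) (not_lt.1 hnlt)
  exact heq ▸ orderOf_dvd_of_pow_eq_one hxd

private lemma dvd_card_pow_deg_sub_one {F : Type*} [Field F] [Fintype F] (f : Polynomial F)
    (hirr : Irreducible f) (M M' rr : ℕ) (hM : M = rr * M') (hrr : rr.Prime) (hM'0 : 0 < M')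
    (hfM : f ∣ X ^ M - 1) (hfM' : ¬ f ∣ X ^ M' - 1) :
    rr ∣ Fintype.card F ^ f.natDegree - 1 := by
  haveI := Fact.mk hirr
  have hf0 : f ≠ 0 := hirr.ne_zero
  letI : Fintype (AdjoinRoot f) := Module.fintypeOfFintype (AdjoinRoot.powerBasis hf0).basis
  letI : DecidableEq (AdjoinRoot f) := Classical.decEq _
  have hcard : Fintype.card (AdjoinRoot f) = Fintype.card F ^ f.natDegree := by
    rw [Module.card_eq_pow_finrank (K := F) (V := AdjoinRoot f),
      (AdjoinRoot.powerBasis hf0).finrank]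
    rfl
  set ζ : AdjoinRoot f := AdjoinRoot.root f with hζ
  have haev : ∀ L : ℕ, ζ ^ L - 1 = AdjoinRoot.mk f (X ^ L - 1) := by
    intro L
    rw [← AdjoinRoot.aeval_eq]
    simp [hζ]
  have hζM : ζ ^ M = 1 := by
    have := haev M
    rw [AdjoinRoot.mk_eq_zero.2 hfM] at this
    linear_combination this
  have hζM' : ζ ^ M' ≠ 1 := by
    intro h
    apply hfM'
    rw [← AdjoinRoot.mk_eq_zero, ← haev M', h, sub_self]
  have hM0 : 0 < M := by
    rw [hM]; exact Nat.mul_pos hrr.pos hM'0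
  have hζ0 : ζ ≠ 0 := by
    intro h
    rw [h, zero_pow hM0.ne'] at hζM
    exact zero_ne_one hζM
  obtain ⟨u, hu⟩ := (isUnit_iff_ne_zero).2 hζ0
  have hord_dvd_M : orderOf ζ ∣ M := orderOf_dvd_of_pow_eq_one hζM
  have hr_dvd : rr ∣ orderOf ζ := by
    by_contra hnd
    have hcop : Nat.Coprime (orderOf ζ) rr := ((hrr.coprime_iff_not_dvd).2 hnd).symm
    have : orderOf ζ ∣ M' := hcop.dvd_of_dvd_mul_right (by rwa [hM, mul_comm] at hord_dvd_M)
    exact hζM' (orderOf_dvd_iff_pow_eq_one.1 this)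
  have hcardu : orderOf ζ ∣ Fintype.card F ^ f.natDegree - 1 := by
    have h1 : orderOf u ∣ Fintype.card (AdjoinRoot f)ˣ := orderOf_dvd_card
    rw [Fintype.card_units, hcard] at h1
    rwa [show orderOf u = orderOf ζ by rw [← hu, orderOf_units]] at h1
  exact dvd_trans hr_dvd hcardu

private lemma no_shrink {c X Nv : ℕ} (hc : 2 ≤ c) (hX : 0 < X) (h1 : Nv = c * X)
    (h2 : Nv ≤ X) : False := by
  subst h1
  have h3 : 2 * X ≤ c * X := Nat.mul_le_mul_right X hc
  have h4 : 2 * X ≤ X := le_trans h3 h2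
  omega

/-- If `n = s + b₁ + ⋯ + b_k` with `s = 0` or `s = p^t`, the `bᵢ` pairwise coprime and
greater than `1`, and `rᵢ` a primitive prime divisor of `q^{bᵢ} - 1`, then `SL_n(F_q)`
contains no element of order `p^{t+1}·r₁⋯r_k` (with `t = 0` if `s = 0`). -/
theorem SL_no_element_of_order (p m q : ℕ) (hp : p.Prime) (hm : 0 < m) (hq : q = p ^ m)
    (k : ℕ) (b : Fin k → ℕ) (hb : ∀ i, 1 < b i)
    (hcop : ∀ i j, i ≠ j → Nat.Coprime (b i) (b j))
    (s t : ℕ) (hst : (s = 0 ∧ t = 0) ∨ s = p ^ t)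
    (n : ℕ) (hn : n = s + ∑ i, b i)
    (r : Fin k → ℕ)
    (hr : ∀ i, (r i).Prime ∧ r i ∣ q ^ b i - 1 ∧
      ∀ j : ℕ, 1 ≤ j → j < b i → ¬ r i ∣ q ^ j - 1)
    (F : Type*) [Field F] [Fintype F] (hF : Fintype.card F = q) :
    ¬ ∃ g : Matrix.SpecialLinearGroup (Fin n) F,
        orderOf g = p ^ (t + 1) * ∏ i, r i := by
  classical
  rintro ⟨g, hg⟩
  -- basic numerology
  have hq2 : 2 ≤ q := by
    rw [hq]
    calc 2 ≤ p := hp.two_le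
      _ ≤ p ^ m := Nat.le_self_pow hm.ne' p
  set M : ℕ := ∏ i, r i with hM
  have hrp : ∀ i, (r i).Prime := fun i => (hr i).1
  have hrne : ∀ i, r i ≠ p := by
    intro i he
    have h1 : p ∣ q ^ b i - 1 := he ▸ (hr i).2.1
    have h2 : p ∣ q ^ b i := by
      rw [hq, ← pow_mul]
      exact dvd_pow_self p (Nat.mul_ne_zero hm.ne' (by have := hb i; omega))
    have h3 : q ^ b i - (q ^ b i - 1) = 1 := by
      have : 1 ≤ q ^ b i := Nat.one_le_pow _ _ (by omega)
      omega
    have h4 : p ∣ 1 := by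
      have := Nat.dvd_sub h2 h1
      rwa [h3] at this
    exact hp.one_lt.ne' (Nat.dvd_one.1 h4)
  have hpM : ¬ p ∣ M := by
    intro h
    obtain ⟨i, -, hi⟩ := hp.prime.exists_mem_finset_dvd h
    exact hrne i ((Nat.prime_dvd_prime_iff_eq hp (hrp i)).1 hi).symm
  have hM0 : 0 < M := Finset.prod_pos fun i _ => (hrp i).pos
  set N : ℕ := p ^ (t + 1) * M with hN
  -- characteristic of F
  have hcharF : CharP F p := by
    obtain ⟨j, hj, hcard⟩ := FiniteField.card F (ringChar F)
    have : ringChar F = p := by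
      have h1 : ringChar F ∣ p ^ m := by
        rw [← hq, ← hF, hcard]
        exact dvd_pow_self _ j.pos.ne'
      exact ((Nat.prime_dvd_prime_iff_eq hj hp).1 (hj.dvd_of_dvd_pow h1))
    exact this ▸ ringChar.charP F
  haveI := hcharF
  haveI : CharP F[X] p := charP_of_injective_algebraMap' F (A := F[X]) p
  haveI := Fact.mk hp
  -- the matrix and its order
  set A : Matrix (Fin n) (Fin n) F := (g : Matrix (Fin n) (Fin n) F) with hA
  have hApow : ∀ j : ℕ, A ^ j = 1 ↔ N ∣ j := by
    intro j
    rw [hA, ← Matrix.SpecialLinearGroup.coe_pow]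
    constructor
    · intro h
      have : g ^ j = 1 := Subtype.coe_injective (by simpa using h)
      rw [← hg]
      exact orderOf_dvd_of_pow_eq_one this
    · intro h
      have : g ^ j = 1 := orderOf_dvd_iff_pow_eq_one.1 (hg ▸ h)
      rw [this]
      simp
  have hInt : IsIntegral F A := IsIntegral.of_finite F A
  set μ : F[X] := minpoly F A with hμ
  have hμ0 : μ ≠ 0 := minpoly.ne_zero hInt
  have hdvd_iff : ∀ j : ℕ, (μ ∣ X ^ j - 1 ↔ N ∣ j) := by
    intro j
    constructor
    · rintro ⟨c, hc⟩
      have h0 : (Polynomial.aeval A) ((X : F[X]) ^ j - 1) = 0 := by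
        rw [hc, map_mul, minpoly.aeval, zero_mul]
      have : A ^ j - 1 = 0 := by simpa using h0
      exact (hApow j).1 (by rwa [sub_eq_zero] at this)
    · intro h
      apply minpoly.dvd
      have : A ^ j = 1 := (hApow j).2 h
      simp [this]
  -- polynomial identities
  have hXpow : ∀ (L e : ℕ), ((X : F[X]) ^ L - 1) ^ p ^ e = X ^ (L * p ^ e) - 1 := by
    intro L e
    rw [sub_pow_char_pow, one_pow, ← pow_mul]
  have hXM0 : (X : F[X]) ^ M - 1 ≠ 0 := by
    have := Polynomial.X_pow_sub_C_ne_zero (R := F) hM0 1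
    rwa [map_one] at this
  have hsqf : Squarefree ((X : F[X]) ^ M - 1) := by
    have hsep : ((X : F[X]) ^ M - C 1).Separable :=
      Polynomial.separable_X_pow_sub_C' p M 1 hpM one_ne_zero
    rw [map_one] at hsep
    exact hsep.squarefree
  set Φ : Multiset F[X] := normalizedFactors ((X : F[X]) ^ M - 1) with hΦ
  have hnodup : Φ.Nodup := (squarefree_iff_nodup_normalizedFactors hXM0).1 hsqf
  -- μ divides (X^M-1)^{p^{t+1}}
  have hμdvd : μ ∣ ((X : F[X]) ^ M - 1) ^ p ^ (t + 1) := by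
    rw [hXpow]
    exact (hdvd_iff _).2 ⟨1, by ring⟩
  have hle : normalizedFactors μ ≤ p ^ (t + 1) • Φ := by
    rw [hΦ, ← normalizedFactors_pow]
    exact (dvd_iff_normalizedFactors_le_normalizedFactors hμ0 (pow_ne_zero _ hXM0)).1 hμdvd
  -- existence of f₀ with multiplicity ≥ p^t + 1
  have hnotdvd : ¬ μ ∣ ((X : F[X]) ^ M - 1) ^ p ^ t := by
    rw [hXpow]
    intro h
    have hdvd : N ∣ M * p ^ t := (hdvd_iff _).1 h
    have hle1 : N ≤ M * p ^ t := Nat.le_of_dvd (Nat.mul_pos hM0 (pow_pos hp.pos t)) hdvd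
    have heq1 : N = p * (M * p ^ t) := by rw [hN]; ring
    exact no_shrink hp.two_le (Nat.mul_pos hM0 (pow_pos hp.pos t)) heq1 hle1
  have hnotle : ¬ normalizedFactors μ ≤ p ^ t • Φ := by
    intro h
    apply hnotdvd
    rw [dvd_iff_normalizedFactors_le_normalizedFactors hμ0 (pow_ne_zero _ hXM0),
      normalizedFactors_pow]
    exact h
  obtain ⟨f₀, hf₀⟩ : ∃ f₀, p ^ t * Φ.count f₀ < (normalizedFactors μ).count f₀ := by
    by_contra h
    push_neg at h
    exact hnotle (Multiset.le_iff_count.2 fun a => by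
      rw [Multiset.count_nsmul]; exact h a)
  have hf₀Φ : f₀ ∈ Φ := by
    by_contra h
    have h1 : Φ.count f₀ = 0 := Multiset.count_eq_zero_of_notMem h
    have h2 := Multiset.le_iff_count.1 hle f₀
    rw [Multiset.count_nsmul, h1, mul_zero] at h2
    omega
  have hcount₀ : p ^ t + 1 ≤ (normalizedFactors μ).count f₀ := by
    have h1 : Φ.count f₀ = 1 := Multiset.count_eq_one_of_mem hnodup hf₀Φ
    rw [h1, mul_one] at hf₀
    omega
  have hf₀mem : f₀ ∈ normalizedFactors μ := by
    rw [← Multiset.count_pos]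
    omega
  have hf₀irr : Irreducible f₀ := irreducible_of_normalized_factor f₀ hf₀mem
  -- general facts about factors of μ
  have hcount_le : ∀ h ∈ normalizedFactors μ, (normalizedFactors μ).count h ≤ p ^ (t + 1) := by
    intro h hmem
    have h2 := Multiset.le_iff_count.1 hle h
    rw [Multiset.count_nsmul] at h2
    rcases Nat.eq_zero_or_pos (Φ.count h) with h3 | h3
    · rw [h3, mul_zero] at h2
      omega
    · have : Φ.count h = 1 := Multiset.count_eq_one_of_mem hnodup (Multiset.count_pos.1 h3)
      rw [this, mul_one] at h2
      exact h2
  -- the primitive-prime-divisor factors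
  set Mi : Fin k → ℕ := fun i => ∏ j ∈ Finset.univ.erase i, r j with hMi
  have hMeq : ∀ i, M = r i * Mi i := by
    intro i
    rw [hM, hMi, ← Finset.mul_prod_erase _ _ (Finset.mem_univ i)]
  have hMi0 : ∀ i, 0 < Mi i := fun i => Finset.prod_pos fun j _ => (hrp j).pos
  have hexists : ∀ i : Fin k, ∃ f ∈ normalizedFactors μ, ¬ f ∣ (X : F[X]) ^ Mi i - 1 := by
    intro i
    by_contra h
    push_neg at h
    have hXMi0 : (X : F[X]) ^ Mi i - 1 ≠ 0 := by
      have := Polynomial.X_pow_sub_C_ne_zero (R := F) (hMi0 i) 1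
      rwa [map_one] at this
    have hleMi : normalizedFactors μ ≤ p ^ (t + 1) • normalizedFactors ((X : F[X]) ^ Mi i - 1) := by
      rw [Multiset.le_iff_count]
      intro a
      by_cases ha : a ∈ normalizedFactors μ
      · have hadvd : a ∣ (X : F[X]) ^ Mi i - 1 := h a ha
        have hairr : Irreducible a := irreducible_of_normalized_factor a ha
        have hanorm : normalize a = a := normalize_normalized_factor a ha
        obtain ⟨q', hq'mem, hq'⟩ :=
          exists_mem_normalizedFactors_of_dvd hXMi0 hairr hadvd
        have haq : a = q' := by
          rw [← hanorm, ← normalize_normalized_factor q' hq'mem]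
          exact normalize_eq_normalize hq'.dvd hq'.symm.dvd
        have h1 : 1 ≤ (normalizedFactors ((X : F[X]) ^ Mi i - 1)).count a := by
          rw [Multiset.one_le_count_iff_mem, haq]
          exact hq'mem
        have h2 : (normalizedFactors μ).count a ≤ p ^ (t + 1) := hcount_le a ha
        rw [Multiset.count_nsmul]
        calc (normalizedFactors μ).count a ≤ p ^ (t + 1) := h2
          _ ≤ p ^ (t + 1) * (normalizedFactors ((X : F[X]) ^ Mi i - 1)).count a :=
            Nat.le_mul_of_pos_right _ h1
      · rw [Multiset.count_eq_zero_of_notMem ha]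
        omega
    have hμdvdMi : μ ∣ ((X : F[X]) ^ Mi i - 1) ^ p ^ (t + 1) := by
      rw [dvd_iff_normalizedFactors_le_normalizedFactors hμ0 (pow_ne_zero _ hXMi0),
        normalizedFactors_pow]
      exact hleMi
    rw [hXpow] at hμdvdMi
    have hdvdN : N ∣ Mi i * p ^ (t + 1) := (hdvd_iff _).1 hμdvdMi
    have hNle : N ≤ Mi i * p ^ (t + 1) :=
      Nat.le_of_dvd (Nat.mul_pos (hMi0 i) (pow_pos hp.pos (t + 1))) hdvdN
    have heq2 : N = r i * (Mi i * p ^ (t + 1)) := by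
      rw [hN, hMeq i]; ring
    exact no_shrink (hrp i).two_le (Nat.mul_pos (hMi0 i) (pow_pos hp.pos (t + 1))) heq2 hNle
  choose f hfmem hfndvd using hexists
  -- each f i has degree divisible by b i
  have hfdvdμ : ∀ h ∈ normalizedFactors μ, h ∣ (X : F[X]) ^ M - 1 := by
    intro h hmem
    have hpr : Prime h := prime_of_normalized_factor h hmem
    have : h ∣ μ := dvd_of_mem_normalizedFactors hmem
    exact hpr.dvd_of_dvd_pow (this.trans hμdvd)
  have hbdeg : ∀ i, b i ∣ (f i).natDegree := by
    intro i
    have hirr : Irreducible (f i) := irreducible_of_normalized_factor _ (hfmem i)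
    have hrdvd : r i ∣ q ^ (f i).natDegree - 1 := by
      rw [← hF]
      exact dvd_card_pow_deg_sub_one (f i) hirr M (Mi i) (r i) (hMeq i) (hrp i) (hMi0 i)
        (hfdvdμ _ (hfmem i)) (hfndvd i)
    exact order_dvd_aux q (r i) (b i) (f i).natDegree hq2 (hrp i) (by have := hb i; omega)
      (hr i).2.1 (hr i).2.2 hrdvd
  -- assemble the dividing multiset
  set G : Finset F[X] := Finset.image f Finset.univ with hG
  set m' : Multiset F[X] := Multiset.replicate (p ^ t + 1) f₀ + (G.erase f₀).val with hm'
  have hm'le : m' ≤ normalizedFactors μ := by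
    rw [Multiset.le_iff_count]
    intro a
    rw [hm', Multiset.count_add, Multiset.count_replicate]
    by_cases ha : a = f₀
    · subst ha
      rw [if_pos rfl, Multiset.count_eq_zero_of_notMem
        (by rw [Finset.mem_val]; exact Finset.notMem_erase a G)]
      simpa using hcount₀
    · rw [if_neg (fun e => ha e.symm), zero_add]
      by_cases hmem : a ∈ (G.erase f₀).val
      · have h1 : (G.erase f₀).val.count a = 1 := Multiset.count_eq_one_of_mem (G.erase f₀).nodup hmem
        rw [h1]
        rw [Multiset.one_le_count_iff_mem]
        have : a ∈ G := Finset.mem_of_mem_erase hmem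
        obtain ⟨i, -, hi⟩ := Finset.mem_image.1 this
        exact hi ▸ hfmem i
      · rw [Multiset.count_eq_zero_of_notMem hmem]
        omega
  have hm'dvd : m'.prod ∣ μ :=
    (Multiset.prod_dvd_prod_of_le hm'le).trans (prod_normalizedFactors hμ0).dvd
  -- degree bounds
  have hμdeg : μ.natDegree ≤ n := by
    have h1 : μ ∣ A.charpoly := Matrix.minpoly_dvd_charpoly A
    have h2 : A.charpoly.natDegree = n := by
      rw [Matrix.charpoly_natDegree_eq_dim, Fintype.card_fin]
    rw [← h2]
    exact Polynomial.natDegree_le_of_dvd h1 (A.charpoly_monic.ne_zero)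
  have hm'deg : m'.prod.natDegree ≤ n :=
    le_trans (Polynomial.natDegree_le_of_dvd hm'dvd hμ0) hμdeg
  have hm'ne : (0 : F[X]) ∉ m' := by
    intro h0
    have : Irreducible (0 : F[X]) := by
      rw [hm', Multiset.mem_add] at h0
      rcases h0 with h0 | h0
      · rw [Multiset.eq_of_mem_replicate h0]
        exact hf₀irr
      · have : (0 : F[X]) ∈ G := Finset.mem_of_mem_erase h0
        obtain ⟨i, -, hi⟩ := Finset.mem_image.1 this
        exact hi ▸ irreducible_of_normalized_factor _ (hfmem i)
    exact this.ne_zero rfl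
  have hdegsum : m'.prod.natDegree
      = (p ^ t + 1) * f₀.natDegree + ∑ h ∈ G.erase f₀, h.natDegree := by
    rw [Polynomial.natDegree_multiset_prod _ hm'ne, hm', Multiset.map_add, Multiset.sum_add,
      Multiset.map_replicate, Multiset.sum_replicate, smul_eq_mul]
    rfl
  -- arithmetic conclusion
  have hdeg_pos : ∀ h ∈ G, 0 < h.natDegree := by
    intro h hmem
    obtain ⟨i, -, hi⟩ := Finset.mem_image.1 hmem
    exact hi ▸ (irreducible_of_normalized_factor _ (hfmem i)).natDegree_pos
  have hfiber : ∀ h ∈ G, ∑ i ∈ Finset.univ.filter (fun i => f i = h), b i ≤ h.natDegree := by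
    intro h hmem
    have hdvd : ∏ i ∈ Finset.univ.filter (fun i => f i = h), b i ∣ h.natDegree := by
      apply prod_dvd_of_pairwise_coprime _ _ hcop
      intro i hi
      rw [Finset.mem_filter] at hi
      exact hi.2 ▸ hbdeg i
    calc ∑ i ∈ Finset.univ.filter (fun i => f i = h), b i
        ≤ ∏ i ∈ Finset.univ.filter (fun i => f i = h), b i :=
          sum_le_prod_of_two_le _ _ fun i _ => hb i
      _ ≤ h.natDegree := Nat.le_of_dvd (hdeg_pos h hmem) hdvd
  have hsumb : ∑ i, b i ≤ ∑ h ∈ G, h.natDegree := by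
    have := Finset.sum_fiberwise_of_maps_to (s := Finset.univ) (t := G) (g := f)
      (fun i _ => Finset.mem_image_of_mem f (Finset.mem_univ i)) b
    rw [← this]
    exact Finset.sum_le_sum hfiber
  have hf₀deg : 0 < f₀.natDegree := hf₀irr.natDegree_pos
  have hpt1 : 1 ≤ p ^ t := Nat.one_le_pow t p hp.pos
  have hs_le : s ≤ p ^ t := by
    rcases hst with ⟨h1, h2⟩ | h1
    · omega
    · omega
  by_cases hf₀G : f₀ ∈ G
  · have hdeg2 : 2 ≤ f₀.natDegree := by
      obtain ⟨i, -, hi⟩ := Finset.mem_image.1 hf₀G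
      have := hbdeg i
      rw [hi] at this
      have := Nat.le_of_dvd hf₀deg this
      have := hb i
      omega
    have hsplit : ∑ h ∈ G, h.natDegree
        = f₀.natDegree + ∑ h ∈ G.erase f₀, h.natDegree := by
      rw [← Finset.add_sum_erase _ _ hf₀G]
    have := hm'deg
    rw [hdegsum] at this
    rw [hsplit] at hsumb
    rw [hn] at this
    have hexp : (p ^ t + 1) * f₀.natDegree = p ^ t * f₀.natDegree + f₀.natDegree := by ring
    have hPD : p ^ t * 2 ≤ p ^ t * f₀.natDegree := Nat.mul_le_mul_left _ hdeg2
    linarith only [this, hsumb, hexp, hPD, hs_le, hpt1]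
  · have herase : G.erase f₀ = G := Finset.erase_eq_of_notMem hf₀G
    have := hm'deg
    rw [hdegsum, herase] at this
    rw [hn] at this
    have hexp : (p ^ t + 1) * f₀.natDegree = p ^ t * f₀.natDegree + f₀.natDegree := by ring
    have hPD : p ^ t * 1 ≤ p ^ t * f₀.natDegree := Nat.mul_le_mul_left _ hf₀deg
    linarith only [this, hsumb, hexp, hPD, hs_le, hpt1, hf₀deg]
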